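/- Let M be a matroid, let E be a finite subset of its ground set equipped with a linear order, and let 𝒞 be an arbitrary set of circuits of M, each contained in E. Let D = { the largest element of C : C ∈ 𝒞 } and let E' = E \ D. Then (1) every circuit in 𝒞 has at least one element removed, i.e., meets D; and (2) the rank of E' in M equals the rank of E in M. -/

import Mathlib

/-- A circuit of a matroid: a minimal dependent subset of the ground set. -/
def IsCircuitOf {α : Type*} (M : Matroid α) (C : Set α) : Prop :=
  C ⊆ M.E ∧ ¬ M.Indep C ∧ ∀ D : Set α, D ⊂ C → M.Indep D

/-- The rank of a set `S` in a matroid `M`: the maximum cardinality of an independent subset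
of `S`. -/
noncomputable def matroidRank {α : Type*} (M : Matroid α) (S : Set α) : ℕ :=
  sSup {n : ℕ | ∃ I : Set α, I ⊆ S ∧ M.Indep I ∧ I.ncard = n}

/-- For a finite set `S`, if `I` is a basis of `S` then `matroidRank M S = I.ncard`. -/
lemma matroidRank_eq_of_basis' {α : Type*} {M : Matroid α} {S I : Set α}
    (hSfin : S.Finite) (hI : M.IsBasis' I S) : matroidRank M S = I.ncard := by
  have hIfin : I.Finite := hSfin.subset hI.subset
  apply le_antisymm
  · have hne : {n : ℕ | ∃ J : Set α, J ⊆ S ∧ M.Indep J ∧ J.ncard = n}.Nonempty :=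
      ⟨0, ∅, Set.empty_subset _, M.empty_indep, by simp⟩
    apply csSup_le hne
    rintro n ⟨J, hJS, hJind, rfl⟩
    obtain ⟨J', hJ'basis, hJJ'⟩ := hJind.subset_isBasis'_of_subset hJS
    have hJ'fin : J'.Finite := hSfin.subset hJ'basis.subset
    have hcard := hJ'basis.encard_eq_encard hI
    have h1 : J.ncard ≤ J'.ncard := Set.ncard_le_ncard hJJ' hJ'fin
    have h2 : J'.ncard = I.ncard := by
      rw [Set.ncard_def, Set.ncard_def, hcard]
    omega
  · apply le_csSup
    · refine ⟨S.ncard, ?_⟩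
      rintro n ⟨J, hJS, _, rfl⟩
      exact Set.ncard_le_ncard hJS hSfin
    · exact ⟨I, hI.subset, hI.indep, rfl⟩

/-- Delete, from a finite subset `E` of the ground set of a matroid, the largest element of each
circuit in a family `𝒞` of circuits contained in `E`. Then every circuit of `𝒞` loses at least
one element, and the rank of the remaining set equals the rank of `E`. -/
theorem delete_largest_element_of_each_circuit {α : Type*} [LinearOrder α] (M : Matroid α)
    (E : Set α) (hEfin : E.Finite) (hE : E ⊆ M.E)
    (𝒞 : Set (Set α)) (h𝒞 : ∀ C ∈ 𝒞, IsCircuitOf M C ∧ C ⊆ E)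
    (D : Set α)
    (hD : ∀ e : α, e ∈ D ↔ ∃ C ∈ 𝒞, e ∈ C ∧ ∀ f ∈ C, f ≤ e) :
    (∀ C ∈ 𝒞, (C ∩ D).Nonempty) ∧ matroidRank M (E \ D) = matroidRank M E := by
  -- every circuit is nonempty and finite, hence has a maximum, which lands in D
  have hpart1 : ∀ C ∈ 𝒞, (C ∩ D).Nonempty := by
    intro C hC
    obtain ⟨⟨hCE', hCdep, _⟩, hCE⟩ := h𝒞 C hC
    have hCne : C.Nonempty := by
      rcases C.eq_empty_or_nonempty with h | h
      · exact absurd (h ▸ M.empty_indep) hCdep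
      · exact h
    have hCfin : C.Finite := hEfin.subset hCE
    obtain ⟨m, hmC, hm⟩ : ∃ m ∈ C, ∀ a ∈ C, m ≤ a → m = a := by
      obtain ⟨m, hmC, h⟩ := Set.exists_max_image C id hCfin hCne
      exact ⟨m, hmC, fun a ha hle => le_antisymm hle (h a ha)⟩
    have hmmax : ∀ f ∈ C, f ≤ m := by
      intro f hf
      by_contra hlt
      push_neg at hlt
      exact hlt.ne (hm f hf hlt.le)
    exact ⟨m, hmC, (hD m).2 ⟨C, hC, hmC, hmmax⟩⟩
  refine ⟨hpart1, ?_⟩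
  -- key claim: E ⊆ closure (E \ D)
  have hkey : E ⊆ M.closure (E \ D) := by
    have main : ∀ n : ℕ, ∀ e ∈ E, ({f ∈ E | f < e}).ncard ≤ n → e ∈ M.closure (E \ D) := by
      intro n
      induction n with
      | zero =>
        intro e heE hcard
        by_cases heD : e ∈ D
        · obtain ⟨C, hC, heC, hmax⟩ := (hD e).1 heD
          obtain ⟨⟨hCE', hCdep, hCmin⟩, hCE⟩ := h𝒞 C hC
          -- C \ {e} ⊆ {f ∈ E | f < e}, which is empty
          have hempty : {f ∈ E | f < e} = ∅ := by
            rw [← Set.ncard_eq_zero (hEfin.subset (Set.sep_subset _ _))]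
            omega
          have hsub : C \ {e} = ∅ := by
            ext f
            simp only [Set.mem_diff, Set.mem_singleton_iff, Set.mem_empty_iff_false, iff_false]
            rintro ⟨hfC, hfe⟩
            have : f ∈ ({f ∈ E | f < e} : Set α) := ⟨hCE hfC, lt_of_le_of_ne (hmax f hfC) hfe⟩
            simp [hempty] at this
          -- then C = {e}, and e ∈ closure ∅ ⊆ closure (E \ D)
          have hCeq : C = {e} := by
            apply Set.eq_singleton_iff_unique_mem.2 ⟨heC, ?_⟩
            intro f hf
            by_contra hfe
            have : f ∈ C \ {e} := ⟨hf, hfe⟩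
            simp [hsub] at this
          have hind : M.Indep (∅ : Set α) := M.empty_indep
          have : e ∈ M.closure ∅ := by
            rw [hind.mem_closure_iff]
            left
            have h' : insert e (∅ : Set α) = C := by rw [hCeq]; simp
            rw [h']
            exact ⟨hCdep, hCE'⟩
          exact M.closure_subset_closure (Set.empty_subset _) this
        · exact M.mem_closure_of_mem ⟨heE, heD⟩ ((Set.diff_subset).trans hE)
      | succ n ih =>
        intro e heE hcard
        by_cases heD : e ∈ D
        · obtain ⟨C, hC, heC, hmax⟩ := (hD e).1 heD
          obtain ⟨⟨hCE', hCdep, hCmin⟩, hCE⟩ := h𝒞 C hC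
          have hCe_indep : M.Indep (C \ {e}) :=
            hCmin _ (Set.sdiff_singleton_ssubset.2 heC)
          have heCl : e ∈ M.closure (C \ {e}) := by
            rw [hCe_indep.mem_closure_iff]
            left
            rw [Set.insert_diff_singleton, Set.insert_eq_of_mem heC]
            exact ⟨hCdep, hCE'⟩
          have hCsub : C \ {e} ⊆ M.closure (E \ D) := by
            rintro f ⟨hfC, hfe⟩
            have hflt : f < e := lt_of_le_of_ne (hmax f hfC) hfe
            apply ih f (hCE hfC)
            have hss : {g ∈ E | g < f} ⊂ {g ∈ E | g < e} := by
              constructor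
              · rintro g ⟨hgE, hgf⟩
                exact ⟨hgE, hgf.trans hflt⟩
              · intro hcon
                have : f ∈ ({g ∈ E | g < f} : Set α) := hcon ⟨hCE hfC, hflt⟩
                exact absurd this.2 (lt_irrefl f)
            have := Set.ncard_lt_ncard hss (hEfin.subset (Set.sep_subset _ _))
            omega
          exact M.closure_subset_closure_of_subset_closure hCsub heCl
        · exact M.mem_closure_of_mem ⟨heE, heD⟩ ((Set.diff_subset).trans hE)
    intro e heE
    exact main ({f ∈ E | f < e}).ncard e heE le_rfl
  -- now take a basis of E \ D; it is also a basis of E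
  obtain ⟨I, hI⟩ := M.exists_isBasis (E \ D) ((Set.diff_subset).trans hE)
  have hIE : M.IsBasis I E := by
    refine hI.indep.isBasis_of_subset_of_subset_closure (hI.subset.trans Set.diff_subset) ?_
    rw [hI.closure_eq_closure]
    exact hkey
  rw [matroidRank_eq_of_basis' (hEfin.subset Set.diff_subset) hI.isBasis',
    matroidRank_eq_of_basis' hEfin hIE.isBasis']
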